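/- Let ρ : ℝ → ℝ be an even C¹ function whose derivative ρ′ is Lipschitz with constant L (so in particular ρ′(0) = 0). For ε > 0 and x ∈ ℝⁿ define Φ : ℝⁿ → ℝⁿ by Φ(y) = (1/ε) ρ′(|y−x|/ε) (y−x)/|y−x| for y ≠ x and Φ(x) = 0. Then Φ is the gradient of the function y ↦ ρ(|y−x|/ε), and Φ is Lipschitz on ℝⁿ with Lipschitz constant at most L/ε². -/

import Mathlib

open InnerProductSpace Asymptotics

private lemma stmt18_core (K r1 r2 t A B : ℝ) (hr1 : 0 < r1) (hr2 : 0 < r2)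
    (hA : |A| ≤ K * r1) (hB : |B| ≤ K * r2) (hAB : |A - B| ≤ K * |r1 - r2|)
    (hts : |t| ≤ r1 * r2) :
    A^2 + B^2 - 2 * ((A/r1) * (B/r2) * t) ≤ K^2 * (r1^2 - 2*t + r2^2) := by
  have hd : (A - B)^2 ≤ K^2 * (r1 - r2)^2 := by
    nlinarith [sq_abs (A - B), sq_abs (r1 - r2), abs_nonneg (A - B), abs_nonneg (r1 - r2)]
  have hs : (A + B)^2 ≤ K^2 * (r1 + r2)^2 := by
    have h1 : |A + B| ≤ K * (r1 + r2) := by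
      calc |A + B| ≤ |A| + |B| := abs_add_le _ _
        _ ≤ K * r1 + K * r2 := add_le_add hA hB
        _ = K * (r1 + r2) := by ring
    nlinarith [sq_abs (A + B), abs_nonneg (A + B)]
  have ht1 : -(r1 * r2) ≤ t := neg_le_of_abs_le hts
  have ht2 : t ≤ r1 * r2 := le_of_abs_le hts
  have h1 : 0 ≤ (r1 * r2 + t) * (K^2 * (r1 - r2)^2 - (A - B)^2) :=
    mul_nonneg (by linarith) (by linarith)
  have h2 : 0 ≤ (r1 * r2 - t) * (K^2 * (r1 + r2)^2 - (A + B)^2) :=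
    mul_nonneg (by linarith) (by linarith)
  have hmul : (A^2 + B^2 - 2 * ((A/r1) * (B/r2) * t)) * (2 * r1 * r2)
      ≤ (K^2 * (r1^2 - 2*t + r2^2)) * (2 * r1 * r2) := by
    have e : (A/r1) * (B/r2) * t * (2 * r1 * r2) = 2 * (A * B * t) := by
      field_simp
    nlinarith [h1, h2, e]
  have hpos : 0 < 2 * r1 * r2 := by positivity
  exact le_of_mul_le_mul_right hmul hpos

theorem stmt18 {n : ℕ} (ρ : ℝ → ℝ) (hρ : ContDiff ℝ 1 ρ) (hρe : ∀ s, ρ (-s) = ρ s)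
    (L : NNReal) (hL : LipschitzWith L (deriv ρ))
    (ε : ℝ) (hε : 0 < ε) (x : EuclideanSpace ℝ (Fin n))
    (Φ : EuclideanSpace ℝ (Fin n) → EuclideanSpace ℝ (Fin n))
    (hΦ : ∀ y, Φ y = ((1 / ε) * deriv ρ (‖y - x‖ / ε) / ‖y - x‖) • (y - x)) :
    (∀ y, HasGradientAt (fun w => ρ (‖w - x‖ / ε)) (Φ y) y) ∧
    ∀ y₁ y₂, ‖Φ y₁ - Φ y₂‖ ≤ ((L : ℝ) / ε ^ 2) * ‖y₁ - y₂‖ := by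
  -- derivative of ρ vanishes at 0 since ρ is even
  have hd0 : deriv ρ 0 = 0 := by
    have h := deriv_comp_neg (f := ρ) (x := (0:ℝ))
    simp only [neg_zero] at h
    have h2 : deriv (fun s => ρ (-s)) 0 = deriv ρ 0 := by
      congr 1; ext s; exact hρe s
    linarith [h2 ▸ h]
  set K : ℝ := (L : ℝ) / ε ^ 2 with hKdef
  have hK0 : 0 ≤ K := by positivity
  -- Lipschitz property of the scalar coefficient
  have haL : ∀ s1 s2 : ℝ, |(1/ε) * deriv ρ (s1/ε) - (1/ε) * deriv ρ (s2/ε)| ≤ K * |s1 - s2| := by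
    intro s1 s2
    have h := hL.dist_le_mul (s1/ε) (s2/ε)
    rw [Real.dist_eq, Real.dist_eq] at h
    have he : |s1/ε - s2/ε| = |s1 - s2| / ε := by
      rw [div_sub_div_same, abs_div, abs_of_pos hε]
    rw [he] at h
    rw [← mul_sub, abs_mul, abs_of_pos (by positivity : (0:ℝ) < 1/ε)]
    calc (1/ε) * |deriv ρ (s1/ε) - deriv ρ (s2/ε)|
        ≤ (1/ε) * ((L:ℝ) * (|s1-s2|/ε)) := by
          apply mul_le_mul_of_nonneg_left h (by positivity)
      _ = K * |s1 - s2| := by rw [hKdef]; ring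
  have haA : ∀ s : ℝ, 0 ≤ s → |(1/ε) * deriv ρ (s/ε)| ≤ K * s := by
    intro s hs
    have h := haL s 0
    simp only [zero_div, hd0, mul_zero, sub_zero] at h
    rwa [abs_of_nonneg hs] at h
  have hΦ0 : Φ x = 0 := by rw [hΦ x]; simp
  -- single-point bound
  have hsingle : ∀ y, ‖Φ y‖ ≤ K * ‖y - x‖ := by
    intro y
    rcases eq_or_ne y x with rfl | hy
    · simp [hΦ0]
    · have hr0 : 0 < ‖y - x‖ := by simpa [sub_eq_zero] using hy
      rw [hΦ y, norm_smul, Real.norm_eq_abs, abs_div, abs_of_pos hr0,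
        div_mul_cancel₀ _ hr0.ne']
      exact haA _ hr0.le
  constructor
  · -- gradient
    intro y
    rcases eq_or_ne y x with rfl | hy
    · -- at the center
      rw [hΦ0, hasGradientAt_iff_hasFDerivAt]
      have h0 : (toDual ℝ (EuclideanSpace ℝ (Fin n)) 0) = 0 := by simp
      rw [h0, hasFDerivAt_iff_isLittleO_nhds_zero]
      have hder : HasDerivAt ρ 0 0 := by
        have := ((hρ.differentiable one_ne_zero) 0).hasDerivAt
        rwa [hd0] at this
      have hlo : (fun s : ℝ => ρ s - ρ 0) =o[nhds (0:ℝ)] fun s => s := by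
        have := (hasDerivAt_iff_isLittleO.1 hder)
        simpa using this
      have htend : Filter.Tendsto (fun h : EuclideanSpace ℝ (Fin n) => ‖h‖ / ε)
          (nhds 0) (nhds 0) := by
        have : Filter.Tendsto (fun h : EuclideanSpace ℝ (Fin n) => ‖h‖) (nhds 0) (nhds 0) := by
          simpa using (continuous_norm (E := EuclideanSpace ℝ (Fin n))).tendsto 0
        simpa using this.div_const ε
      have hcomp := hlo.comp_tendsto htend
      have hbig : (fun h : EuclideanSpace ℝ (Fin n) => ‖h‖ / ε) =O[nhds 0] fun h => h := by
        apply isBigO_of_le' (c := 1 / ε)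
        intro h
        simp [abs_of_pos hε, div_eq_mul_inv, mul_comm]
      have final := hcomp.trans_isBigO hbig
      simp only [Function.comp_def] at final
      simpa [norm_sub_rev, add_sub_cancel_left] using final
    · -- away from the center
      rw [hΦ y]
      set r := ‖y - x‖ with hr
      have hr0 : 0 < r := by simpa [hr, sub_eq_zero] using hy
      have hq : HasFDerivAt (fun w : EuclideanSpace ℝ (Fin n) => ‖w - x‖ ^ 2)
          (2 • (innerSL ℝ (y - x))) y := by
        have := ((hasFDerivAt_id y).sub_const x).norm_sq
        simpa using this
      have h1' : HasDerivAt (fun t => Real.sqrt t / ε) ((1 / (2 * r)) / ε) (r ^ 2) := by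
        have h1 : HasDerivAt Real.sqrt (1 / (2 * Real.sqrt (r ^ 2))) (r ^ 2) :=
          Real.hasDerivAt_sqrt (by positivity)
        simpa [Real.sqrt_sq hr0.le] using h1.div_const ε
      have h2 : HasDerivAt ρ (deriv ρ (r / ε)) (Real.sqrt (r ^ 2) / ε) := by
        rw [Real.sqrt_sq hr0.le]
        exact ((hρ.differentiable one_ne_zero) _).hasDerivAt
      have hsq : HasDerivAt (fun t : ℝ => ρ (Real.sqrt t / ε))
          (deriv ρ (r / ε) * ((1 / (2 * r)) / ε)) (r ^ 2) := h2.comp (r ^ 2) h1'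
      have hcomp := hsq.comp_hasFDerivAt y hq
      rw [hasGradientAt_iff_hasFDerivAt]
      have heq : (toDual ℝ (EuclideanSpace ℝ (Fin n)) (((1 / ε) * deriv ρ (r / ε) / r) • (y - x)))
          = (deriv ρ (r / ε) * ((1 / (2 * r)) / ε)) • (2 • (innerSL ℝ (y - x))) := by
        ext w
        simp only [toDual_apply_apply, real_inner_smul_left, ContinuousLinearMap.coe_smul',
          Pi.smul_apply, innerSL_apply_apply, smul_eq_mul]
        field_simp
        ring
      rw [heq]
      have hfun : ((fun t : ℝ => ρ (Real.sqrt t / ε)) ∘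
          fun w : EuclideanSpace ℝ (Fin n) => ‖w - x‖ ^ 2) = fun w => ρ (‖w - x‖ / ε) := by
        funext w; simp [Real.sqrt_sq (norm_nonneg _)]
      rwa [hfun] at hcomp
  · -- Lipschitz bound
    intro y1 y2
    have hyy : y1 - y2 = (y1 - x) - (y2 - x) := by abel
    rcases eq_or_ne y2 x with rfl | hy2
    · rw [hΦ0, sub_zero]
      exact hsingle y1
    rcases eq_or_ne y1 x with rfl | hy1
    · rw [hΦ0, zero_sub, norm_neg, norm_sub_rev y1 y2]
      exact hsingle y2
    · set v1 := y1 - x with hv1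
      set v2 := y2 - x with hv2
      set r1 := ‖v1‖
      set r2 := ‖v2‖
      have hr1 : 0 < r1 := by simpa [r1, hv1, sub_eq_zero] using hy1
      have hr2 : 0 < r2 := by simpa [r2, hv2, sub_eq_zero] using hy2
      set A := (1/ε) * deriv ρ (r1/ε) with hA
      set B := (1/ε) * deriv ρ (r2/ε) with hB
      set t := (inner ℝ v1 v2 : ℝ) with ht
      have hts : |t| ≤ r1 * r2 := abs_real_inner_le_norm v1 v2
      have hΦ1 : Φ y1 = (A / r1) • v1 := hΦ y1
      have hΦ2 : Φ y2 = (B / r2) • v2 := hΦ y2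
      have expand : ‖Φ y1 - Φ y2‖^2
          = A^2 + B^2 - 2 * ((A/r1) * (B/r2) * t) := by
        rw [hΦ1, hΦ2, norm_sub_sq_real, real_inner_smul_left, real_inner_smul_right,
          norm_smul, norm_smul, Real.norm_eq_abs, Real.norm_eq_abs, mul_pow, mul_pow,
          sq_abs, sq_abs, div_pow, div_pow, ← ht]
        field_simp
        ring
      have expand2 : ‖y1 - y2‖^2 = r1^2 - 2*t + r2^2 := by
        rw [hyy, norm_sub_sq_real]
        try rw [← ht]
        try ring
      have key : ‖Φ y1 - Φ y2‖^2 ≤ (K * ‖y1 - y2‖)^2 :=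
        calc ‖Φ y1 - Φ y2‖^2 = A^2 + B^2 - 2 * ((A/r1) * (B/r2) * t) := expand
          _ ≤ K^2 * (r1^2 - 2*t + r2^2) :=
              stmt18_core K r1 r2 t A B hr1 hr2 (haA r1 hr1.le) (haA r2 hr2.le)
                (haL r1 r2) hts
          _ = (K * ‖y1 - y2‖)^2 := by rw [mul_pow, expand2]
      have := Real.sqrt_le_sqrt key
      rwa [Real.sqrt_sq (norm_nonneg _), Real.sqrt_sq (by positivity)] at this
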